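/- Greedy is a refinement bound: for the greedy decomposition 1=g_0<g_1<...<g_p=K+1 of a plan P and any vertex-disjoint decomposition 1=t_0<t_1<...<t_r=K+1 of P, for every k≤min(p,r) it holds that g_k ≥ t_k; in particular p ≤ r, i.e., the greedy decomposition has the fewest segments. -/

import Mathlib

/-- Paths of length `m` (occupying positions `0,...,m-1`) are non-colliding:
no vertex collisions and no edge swaps. -/
def NonColliding {V : Type*} (m : ℕ) (p q : ℕ → V) : Prop :=
  (∀ k < m, p k ≠ q k) ∧ ∀ k, k + 1 < m → (p k, p (k + 1)) ≠ (q (k + 1), q k)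

/-- The path segments over the time interval `[a, b)` are pairwise vertex disjoint. -/
def SegDisjoint {V : Type*} {n : ℕ} (π : Fin n → ℕ → V) (a b : ℕ) : Prop :=
  ∀ i j : Fin n, i ≠ j → Disjoint (π i '' Set.Ico a b) (π j '' Set.Ico a b)

/-- A vertex-disjoint decomposition of a plan of length `K` (times `0,...,K-1`):
boundaries `0 = t 0 < t 1 < ... < t r = K`, with each segment pairwise vertex disjoint. -/
def IsDecomp {V : Type*} {n : ℕ} (K : ℕ) (π : Fin n → ℕ → V) (r : ℕ)
    (t : Fin (r + 1) → ℕ) : Prop :=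
  t 0 = 0 ∧ t (Fin.last r) = K ∧ StrictMono t ∧
    ∀ k : Fin r, SegDisjoint π (t k.castSucc) (t k.succ)

/-- The index of a plan: the minimal index of a vertex-disjoint decomposition. -/
noncomputable def planIndex {V : Type*} {n : ℕ} (K : ℕ) (π : Fin n → ℕ → V) : ℕ :=
  sInf {r | ∃ t : Fin (r + 1) → ℕ, IsDecomp K π r t}


lemma SegDisjoint.mono {V : Type*} {n : ℕ} {π : Fin n → ℕ → V} {a b a' b' : ℕ}
    (h : SegDisjoint π a b) (ha : a ≤ a') (hb : b' ≤ b) : SegDisjoint π a' b' := by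
  intro i j hij
  exact (h i j hij).mono (Set.image_mono (Set.Ico_subset_Ico ha hb))
    (Set.image_mono (Set.Ico_subset_Ico ha hb))

theorem greedy_refinement_bound {V : Type*} {n K p r : ℕ} (π : Fin n → ℕ → V)
    (g : Fin (p + 1) → ℕ) (t : Fin (r + 1) → ℕ)
    (hg : IsDecomp K π p g)
    (hgreedy : ∀ k : Fin p, (g k.succ : ℕ) = K ∨
      ¬ SegDisjoint π (g k.castSucc) (g k.succ + 1))
    (ht : IsDecomp K π r t) :
    (∀ k : ℕ, ∀ hkp : k ≤ p, ∀ hkr : k ≤ r,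
        t ⟨k, Nat.lt_succ_of_le hkr⟩ ≤ g ⟨k, Nat.lt_succ_of_le hkp⟩) ∧
      p ≤ r := by
  obtain ⟨hg0, hgK, hgm, hgd⟩ := hg
  obtain ⟨ht0, htK, htm, htd⟩ := ht
  have main : ∀ k : ℕ, ∀ hkp : k ≤ p, ∀ hkr : k ≤ r,
      t ⟨k, Nat.lt_succ_of_le hkr⟩ ≤ g ⟨k, Nat.lt_succ_of_le hkp⟩ := by
    intro k
    induction k with
    | zero =>
      intro _ _
      have : (⟨0, Nat.lt_succ_of_le (Nat.zero_le r)⟩ : Fin (r+1)) = 0 := rfl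
      simp only [show (⟨0, _⟩ : Fin (r+1)) = 0 from rfl, show (⟨0, _⟩ : Fin (p+1)) = 0 from rfl,
        ht0, hg0]
      exact le_refl 0
    | succ k ih =>
      intro hkp hkr
      have hk_p : k ≤ p := Nat.le_of_succ_le hkp
      have hk_r : k ≤ r := Nat.le_of_succ_le hkr
      have ihk := ih hk_p hk_r
      by_contra hlt
      push_neg at hlt
      -- g ⟨k+1⟩ < t ⟨k+1⟩
      have hkp' : k < p := hkp
      have hkr' : k < r := hkr
      set kp : Fin p := ⟨k, hkp'⟩
      set kr : Fin r := ⟨k, hkr'⟩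
      have hcast_p : (kp.castSucc : Fin (p+1)) = ⟨k, Nat.lt_succ_of_le hk_p⟩ := rfl
      have hsucc_p : (kp.succ : Fin (p+1)) = ⟨k+1, Nat.lt_succ_of_le hkp⟩ := rfl
      have hcast_r : (kr.castSucc : Fin (r+1)) = ⟨k, Nat.lt_succ_of_le hk_r⟩ := rfl
      have hsucc_r : (kr.succ : Fin (r+1)) = ⟨k+1, Nat.lt_succ_of_le hkr⟩ := rfl
      have hdisj : SegDisjoint π (g kp.castSucc) (g kp.succ + 1) := by
        have := htd kr
        refine this.mono ?_ ?_
        · rw [hcast_r, hcast_p]; exact ihk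
        · rw [hsucc_r, hsucc_p]; exact hlt
      rcases hgreedy kp with hK | hnd
      · -- g (k+1) = K, but t (k+1) > K contradicts t (k+1) ≤ K
        have hle : t ⟨k+1, Nat.lt_succ_of_le hkr⟩ ≤ t (Fin.last r) :=
          htm.monotone (by exact Fin.mk_le_mk.mpr hkr)
        rw [htK] at hle
        rw [← hsucc_p, hK] at hlt
        omega
      · exact hnd hdisj
  refine ⟨main, ?_⟩
  by_contra hpr
  push_neg at hpr
  have h1 := main r (le_of_lt hpr) le_rfl
  have h2 : g ⟨r, Nat.lt_succ_of_le (le_of_lt hpr)⟩ < g (Fin.last p) :=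
    hgm (by exact Fin.mk_lt_mk.mpr hpr)
  rw [hgK] at h2
  have : t ⟨r, Nat.lt_succ_of_le le_rfl⟩ = K := by
    have : (⟨r, Nat.lt_succ_of_le le_rfl⟩ : Fin (r+1)) = Fin.last r := rfl
    rw [this, htK]
  omega
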